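/- Let u, v be positive integers and a, c natural numbers not both zero, and let α_n, γ_n be as defined. Then for every natural number n, γ_n ≥ α_n; moreover, in ℝ, with p₊ = v√u + √(v(4+uv)), p₋ = −v√u + √(v(4+uv)), q₊ = 2 + uv + √(uv(4+uv)) and q₋ = 2 + uv − √(uv(4+uv)), one has γ_n = ((c·p₊ + a·q₊·√u)·(q₊)^n + (c·p₋ − a·q₋·√u)·(q₋)^n) / (2^{n+1}·√(v(4+uv))) and α_n = ((c·p₊ + a·q₊·√u)·(q₊)^n·p₋ − (c·p₋ − a·q₋·√u)·(q₋)^n·p₊) / (2^{n+2}·√(uv(4+uv))). -/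
import Mathlib


/-- The pair (α_n, γ_n) defined by α_0 = a, γ_0 = u·a + c, and
    α_n = α_{n-1} + v·γ_{n-1}, γ_n = u·α_{n-1} + (1+uv)·γ_{n-1}. -/
def ag (u v a c : ℕ) : ℕ → ℕ × ℕ
  | 0 => (a, u * a + c)
  | n + 1 =>
      ((ag u v a c n).1 + v * (ag u v a c n).2,
       u * (ag u v a c n).1 + (1 + u * v) * (ag u v a c n).2)

theorem stmt5 (u v a c : ℕ) (hu : 1 ≤ u) (hv : 1 ≤ v) (hac : ¬(a = 0 ∧ c = 0))
    (pp pm qp qm : ℝ)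
    (hpp : pp = (v : ℝ) * Real.sqrt u + Real.sqrt ((v : ℝ) * (4 + (u : ℝ) * v)))
    (hpm : pm = -((v : ℝ) * Real.sqrt u) + Real.sqrt ((v : ℝ) * (4 + (u : ℝ) * v)))
    (hqp : qp = 2 + (u : ℝ) * v + Real.sqrt ((u : ℝ) * v * (4 + (u : ℝ) * v)))
    (hqm : qm = 2 + (u : ℝ) * v - Real.sqrt ((u : ℝ) * v * (4 + (u : ℝ) * v)))
    (n : ℕ) :
    (ag u v a c n).1 ≤ (ag u v a c n).2 ∧
    ((ag u v a c n).2 : ℝ) =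
      (((c : ℝ) * pp + (a : ℝ) * qp * Real.sqrt u) * qp ^ n +
        ((c : ℝ) * pm - (a : ℝ) * qm * Real.sqrt u) * qm ^ n) /
        (2 ^ (n + 1) * Real.sqrt ((v : ℝ) * (4 + (u : ℝ) * v))) ∧
    ((ag u v a c n).1 : ℝ) =
      (((c : ℝ) * pp + (a : ℝ) * qp * Real.sqrt u) * qp ^ n * pm -
        ((c : ℝ) * pm - (a : ℝ) * qm * Real.sqrt u) * qm ^ n * pp) /
        (2 ^ (n + 2) * Real.sqrt ((u : ℝ) * v * (4 + (u : ℝ) * v))) := by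
  set su := Real.sqrt (u : ℝ) with hsu_def
  set s := Real.sqrt ((v : ℝ) * (4 + (u : ℝ) * v)) with hs_def
  have hsu : su ^ 2 = (u : ℝ) := Real.sq_sqrt (by positivity)
  have hs2 : s ^ 2 = (v : ℝ) * (4 + (u : ℝ) * v) := Real.sq_sqrt (by positivity)
  have hsu0 : 0 < su := Real.sqrt_pos.mpr (by exact_mod_cast hu)
  have hs0 : 0 < s := Real.sqrt_pos.mpr (by positivity)
  have hsS : Real.sqrt ((u : ℝ) * v * (4 + (u : ℝ) * v)) = su * s := by
    rw [show ((u : ℝ) * v * (4 + (u : ℝ) * v)) = (u : ℝ) * ((v : ℝ) * (4 + (u : ℝ) * v)) by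
      ring, Real.sqrt_mul (by positivity), ← hsu_def, ← hs_def]
  rw [hsS] at hqp hqm
  subst hpp hpm hqp hqm
  have key : ∀ m : ℕ,
      (ag u v a c m).1 ≤ (ag u v a c m).2 ∧
      ((ag u v a c m).2 : ℝ) * (2 ^ (m + 1) * s) =
        (((c : ℝ) * ((v : ℝ) * su + s) + (a : ℝ) * (2 + (u : ℝ) * v + su * s) * su) *
            (2 + (u : ℝ) * v + su * s) ^ m +
          ((c : ℝ) * (-((v : ℝ) * su) + s) - (a : ℝ) * (2 + (u : ℝ) * v - su * s) * su) *
            (2 + (u : ℝ) * v - su * s) ^ m) ∧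
      ((ag u v a c m).1 : ℝ) * (2 ^ (m + 2) * (su * s)) =
        (((c : ℝ) * ((v : ℝ) * su + s) + (a : ℝ) * (2 + (u : ℝ) * v + su * s) * su) *
            (2 + (u : ℝ) * v + su * s) ^ m * (-((v : ℝ) * su) + s) -
          ((c : ℝ) * (-((v : ℝ) * su) + s) - (a : ℝ) * (2 + (u : ℝ) * v - su * s) * su) *
            (2 + (u : ℝ) * v - su * s) ^ m * ((v : ℝ) * su + s)) := by
    intro m
    induction m with
    | zero =>
      refine ⟨?_, ?_, ?_⟩
      · show a ≤ u * a + c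
        calc a ≤ u * a := Nat.le_mul_of_pos_left a (by omega)
        _ ≤ u * a + c := Nat.le_add_right _ _
      · show ((u * a + c : ℕ) : ℝ) * (2 ^ (0 + 1) * s) = _
        push_cast
        linear_combination (-2 * (a : ℝ) * s) * hsu
      · show ((a : ℕ) : ℝ) * (2 ^ (0 + 2) * (su * s)) = _
        push_cast
        linear_combination (2 * (a : ℝ) * su * s * v) * hsu
    | succ m ih =>
      obtain ⟨ih1, ih2, ih3⟩ := ih
      set al := ((ag u v a c m).1 : ℝ) with hal
      set ga := ((ag u v a c m).2 : ℝ) with hga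
      set A := (((c : ℝ) * ((v : ℝ) * su + s) + (a : ℝ) * (2 + (u : ℝ) * v + su * s) * su) *
            (2 + (u : ℝ) * v + su * s) ^ m) with hA
      set B := (((c : ℝ) * (-((v : ℝ) * su) + s) - (a : ℝ) * (2 + (u : ℝ) * v - su * s) * su) *
            (2 + (u : ℝ) * v - su * s) ^ m) with hB
      refine ⟨?_, ?_, ?_⟩
      · show (ag u v a c m).1 + v * (ag u v a c m).2 ≤
          u * (ag u v a c m).1 + (1 + u * v) * (ag u v a c m).2
        have h1 : (ag u v a c m).1 ≤ u * (ag u v a c m).1 :=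
          Nat.le_mul_of_pos_left _ (by omega)
        have h2 : v * (ag u v a c m).2 ≤ u * (v * (ag u v a c m).2) :=
          Nat.le_mul_of_pos_left _ (by omega)
        have h3 : u * (v * (ag u v a c m).2) = (u * v) * (ag u v a c m).2 := by ring
        have h4 : (1 + u * v) * (ag u v a c m).2 =
            (ag u v a c m).2 + (u * v) * (ag u v a c m).2 := by ring
        linarith
      · show ((u * (ag u v a c m).1 + (1 + u * v) * (ag u v a c m).2 : ℕ) : ℝ) *
          (2 ^ (m + 1 + 1) * s) =
          (((c : ℝ) * ((v : ℝ) * su + s) + (a : ℝ) * (2 + (u : ℝ) * v + su * s) * su) *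
              (2 + (u : ℝ) * v + su * s) ^ (m + 1) +
            ((c : ℝ) * (-((v : ℝ) * su) + s) - (a : ℝ) * (2 + (u : ℝ) * v - su * s) * su) *
              (2 + (u : ℝ) * v - su * s) ^ (m + 1))
        push_cast
        rw [← hal, ← hga]
        linear_combination su * ih3 + 2 * (1 + (u : ℝ) * v) * ih2 +
          (-(4 * (2 : ℝ) ^ m * s * al) - (v : ℝ) * (A + B)) * hsu
      · show (((ag u v a c m).1 + v * (ag u v a c m).2 : ℕ) : ℝ) *
          (2 ^ (m + 1 + 2) * (su * s)) =
          (((c : ℝ) * ((v : ℝ) * su + s) + (a : ℝ) * (2 + (u : ℝ) * v + su * s) * su) *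
              (2 + (u : ℝ) * v + su * s) ^ (m + 1) * (-((v : ℝ) * su) + s) -
            ((c : ℝ) * (-((v : ℝ) * su) + s) - (a : ℝ) * (2 + (u : ℝ) * v - su * s) * su) *
              (2 + (u : ℝ) * v - su * s) ^ (m + 1) * ((v : ℝ) * su + s))
        push_cast
        rw [← hal, ← hga]
        linear_combination 2 * ih3 + 4 * (v : ℝ) * su * ih2 +
          ((A - B) * (v : ℝ) * s) * hsu + (-(A + B) * su) * hs2
  obtain ⟨h1, h2, h3⟩ := key n
  refine ⟨h1, ?_, ?_⟩
  · rw [eq_div_iff (by positivity)]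
    linarith [h2]
  · rw [hsS, eq_div_iff (by positivity)]
    linarith [h3]
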